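/- Define p_0 = 1, q_0 = 2, and for k ≥ 1, p_k = 2·q_{k−1} and q_k = 3·q_{k−1} − 1. Let T = ⋃_{k ≥ 0} {p_k, p_k+1, ..., q_k}. Then T is 3-free: there exists a bijective enumeration of T that contains no 3-term arithmetic progression as a subsequence. -/

import Mathlib

/-- `f : ℕ → ℕ` is a (bijective) enumeration of the set `S`. -/
def IsPermOf (f : ℕ → ℕ) (S : Set ℕ) : Prop :=
  Function.Injective f ∧ Set.range f = S

/-- A set `S` of naturals is 3-free if some enumeration of `S` contains no
3-term arithmetic progression (with nonzero, possibly negative, common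
difference) as a subsequence. -/
def ThreeFree (S : Set ℕ) : Prop :=
  ∃ f : ℕ → ℕ, IsPermOf f S ∧
    ¬ ∃ i j k : ℕ, i < j ∧ j < k ∧
      ((f j : ℤ) - (f i : ℤ) = (f k : ℤ) - (f j : ℤ)) ∧ f i ≠ f j

/-- `q 0 = 2` and `q (k+1) = 3 * q k - 1`. -/
def q : ℕ → ℕ
  | 0 => 2
  | k + 1 => 3 * q k - 1

/-- `p 0 = 1` and `p (k+1) = 2 * q k`. -/
def p : ℕ → ℕ
  | 0 => 1
  | k + 1 => 2 * q k

/-- A list has no 3-term AP as a subsequence. -/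
def NoAP (l : List ℕ) : Prop := ∀ a b c : ℕ, [a, b, c].Sublist l → 2 * b ≠ a + c


lemma triple_split {α : Type*} {a b c : α} {r1 r2 : List α}
    (h : [a, b, c].Sublist (r1 ++ r2)) :
    [a, b, c].Sublist r1 ∨ ([a].Sublist r1 ∧ [b, c].Sublist r2) ∨
    ([a, b].Sublist r1 ∧ [c].Sublist r2) ∨ [a, b, c].Sublist r2 := by
  rw [List.sublist_append_iff] at h
  obtain ⟨u, v, huv, hu, hv⟩ := h
  rcases u with _ | ⟨x, _ | ⟨y, _ | ⟨z, _ | ⟨w, u⟩⟩⟩⟩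
  · simp only [List.nil_append] at huv
    subst huv
    exact Or.inr (Or.inr (Or.inr hv))
  · simp only [List.cons_append, List.nil_append] at huv
    injection huv with h1 h2
    subst h1; subst h2
    exact Or.inr (Or.inl ⟨hu, hv⟩)
  · simp only [List.cons_append, List.nil_append] at huv
    injection huv with h1 h2; injection h2 with h2 h3
    subst h1; subst h2; subst h3
    exact Or.inr (Or.inr (Or.inl ⟨hu, hv⟩))
  · simp only [List.cons_append, List.nil_append] at huv
    injection huv with h1 h2; injection h2 with h2 h3; injection h3 with h3 h4
    subst h1; subst h2; subst h3
    exact Or.inl hu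
  · exact absurd huv (by simp)

lemma map_triple {f : ℕ → ℕ} {a b c : ℕ} {L : List ℕ}
    (h : [a, b, c].Sublist (L.map f)) :
    ∃ a' b' c', [a', b', c'].Sublist L ∧ a = f a' ∧ b = f b' ∧ c = f c' := by
  rw [List.sublist_map_iff] at h
  obtain ⟨l', hl', hmap⟩ := h
  rcases l' with _ | ⟨a', _ | ⟨b', _ | ⟨c', _ | ⟨d', t⟩⟩⟩⟩
  · simp at hmap
  · simp at hmap
  · simp at hmap
  · simp only [List.map_cons, List.map_nil, List.cons.injEq, and_true] at hmap
    exact ⟨a', b', c', hl', hmap.1, hmap.2.1, hmap.2.2⟩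
  · exfalso
    have := congrArg List.length hmap
    simp at this

lemma noAP_map_add (l : List ℕ) (t : ℕ) (h : NoAP l) : NoAP (l.map (· + t)) := by
  intro a b c hs hne
  obtain ⟨a', b', c', hl', ha, hb, hc⟩ := map_triple hs
  replace ha : a = a' + t := ha
  replace hb : b = b' + t := hb
  replace hc : c = c' + t := hc
  exact h a' b' c' hl' (by omega)

lemma exists_noAP : ∀ n : ℕ, ∃ l : List ℕ,
    (∀ x, x ∈ l ↔ x < n) ∧ l.Nodup ∧ NoAP l := by
  intro n
  induction n using Nat.strong_induction_on with
  | _ n ih =>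
  match n with
  | 0 => exact ⟨[], by simp, by simp, fun a b c hs => by simp at hs⟩
  | 1 =>
    refine ⟨[0], by simp, by simp, fun a b c hs => ?_⟩
    have := hs.length_le; simp at this
  | (m + 2) =>
    set n := m + 2 with hn
    obtain ⟨l1, hm1, hnd1, hap1⟩ := ih (n / 2) (by omega)
    obtain ⟨l2, hm2, hnd2, hap2⟩ := ih ((n + 1) / 2) (by omega)
    refine ⟨l1.map (fun y => 2 * y + 1) ++ l2.map (fun y => 2 * y), ?_, ?_, ?_⟩
    · intro x
      simp only [List.mem_append, List.mem_map, hm1, hm2]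
      constructor
      · rintro (⟨y, hy, rfl⟩ | ⟨y, hy, rfl⟩) <;> omega
      · intro hx
        rcases Nat.even_or_odd x with ⟨y, hy⟩ | ⟨y, hy⟩
        · right; exact ⟨y, by omega, by omega⟩
        · left; exact ⟨y, by omega, by omega⟩
    · rw [List.nodup_append]
      refine ⟨hnd1.map (fun a b hab => by omega), hnd2.map (fun a b hab => by omega), ?_⟩
      rintro x hx1 _ hx2 rfl
      simp only [List.mem_map] at hx1 hx2
      obtain ⟨y1, -, hy1⟩ := hx1
      obtain ⟨y2, -, hy2⟩ := hx2
      omega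
    · intro a b c hs hne
      rcases triple_split hs with h | ⟨hu, hv⟩ | ⟨hu, hv⟩ | h
      · obtain ⟨a', b', c', hl', ha, hb, hc⟩ := map_triple h
        replace ha : a = 2 * a' + 1 := ha
        replace hb : b = 2 * b' + 1 := hb
        replace hc : c = 2 * c' + 1 := hc
        exact hap1 a' b' c' hl' (by omega)
      · have ha : a ∈ l1.map (fun y => 2 * y + 1) := hu.subset (show a ∈ [a] by simp)
        have hb : b ∈ l2.map (fun y => 2 * y) := hv.subset (show b ∈ [b, c] by simp)
        have hc : c ∈ l2.map (fun y => 2 * y) := hv.subset (show c ∈ [b, c] by simp)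
        simp only [List.mem_map] at ha hb hc
        obtain ⟨y1, -, hy1⟩ := ha
        obtain ⟨y2, -, hy2⟩ := hb
        obtain ⟨y3, -, hy3⟩ := hc
        omega
      · have ha : a ∈ l1.map (fun y => 2 * y + 1) := hu.subset (show a ∈ [a, b] by simp)
        have hb : b ∈ l1.map (fun y => 2 * y + 1) := hu.subset (show b ∈ [a, b] by simp)
        have hc : c ∈ l2.map (fun y => 2 * y) := hv.subset (show c ∈ [c] by simp)
        simp only [List.mem_map] at ha hb hc
        obtain ⟨y1, -, hy1⟩ := ha
        obtain ⟨y2, -, hy2⟩ := hb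
        obtain ⟨y3, -, hy3⟩ := hc
        omega
      · obtain ⟨a', b', c', hl', ha, hb, hc⟩ := map_triple h
        replace ha : a = 2 * a' := ha
        replace hb : b = 2 * b' := hb
        replace hc : c = 2 * c' := hc
        exact hap2 a' b' c' hl' (by omega)

lemma two_le_q : ∀ k, 2 ≤ q k := by
  intro k
  induction k with
  | zero => simp [q]
  | succ k ih => simp only [q]; omega

lemma p_le_q : ∀ k, p k ≤ q k := by
  intro k
  match k with
  | 0 => simp [p, q]
  | k + 1 => have := two_le_q k; simp only [p, q]; omega

lemma one_le_p : ∀ k, 1 ≤ p k := by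
  intro k
  match k with
  | 0 => simp [p]
  | k + 1 => have := two_le_q k; simp only [p]; omega

lemma q_mono : Monotone q := by
  apply monotone_nat_of_le_succ
  intro k
  have := two_le_q k
  simp only [q]; omega

/-- AP-free enumeration of the block `[p k, q k]`. -/
noncomputable def LL (k : ℕ) : List ℕ :=
  ((exists_noAP (q k + 1 - p k)).choose).map (· + p k)

lemma mem_LL {x k : ℕ} : x ∈ LL k ↔ p k ≤ x ∧ x ≤ q k := by
  have hspec := (exists_noAP (q k + 1 - p k)).choose_spec
  have hpq := p_le_q k
  simp only [LL, List.mem_map, hspec.1]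
  constructor
  · rintro ⟨y, hy, rfl⟩; omega
  · intro hx; exact ⟨x - p k, by omega, by omega⟩

lemma nodup_LL (k : ℕ) : (LL k).Nodup := by
  have hspec := (exists_noAP (q k + 1 - p k)).choose_spec
  exact hspec.2.1.map (fun a b hab => by omega)

lemma noAP_LL (k : ℕ) : NoAP (LL k) := by
  have hspec := (exists_noAP (q k + 1 - p k)).choose_spec
  exact noAP_map_add _ _ hspec.2.2

lemma LL_ne_nil (k : ℕ) : LL k ≠ [] := by
  intro h
  have : p k ∈ LL k := mem_LL.2 ⟨le_refl _, p_le_q k⟩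
  rw [h] at this; simp at this

/-- Concatenation of the first `k+1` blocks. -/
noncomputable def g : ℕ → List ℕ
  | 0 => LL 0
  | k + 1 => g k ++ LL (k + 1)

lemma mem_g {x : ℕ} : ∀ {k}, x ∈ g k ↔ ∃ m, m ≤ k ∧ p m ≤ x ∧ x ≤ q m := by
  intro k
  induction k with
  | zero =>
    simp only [g, mem_LL]
    constructor
    · intro h; exact ⟨0, le_refl _, h⟩
    · rintro ⟨m, hm, h1, h2⟩
      have hm0 : m = 0 := Nat.le_zero.mp hm
      subst hm0
      exact ⟨h1, h2⟩
  | succ k ih =>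
    simp only [g, List.mem_append, ih, mem_LL]
    constructor
    · rintro (⟨m, hm, h⟩ | h)
      · exact ⟨m, by omega, h⟩
      · exact ⟨k + 1, le_refl _, h⟩
    · rintro ⟨m, hm, h⟩
      rcases Nat.lt_or_ge m (k + 1) with hm' | hm'
      · exact Or.inl ⟨m, by omega, h⟩
      · have hmk : m = k + 1 := by omega
        subst hmk
        exact Or.inr h

lemma g_bounds {x k : ℕ} (h : x ∈ g k) : 1 ≤ x ∧ x ≤ q k := by
  obtain ⟨m, hm, h1, h2⟩ := mem_g.mp h
  exact ⟨le_trans (one_le_p m) h1, le_trans h2 (q_mono hm)⟩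

lemma nodup_g : ∀ k, (g k).Nodup := by
  intro k
  induction k with
  | zero => exact nodup_LL 0
  | succ k ih =>
    rw [g, List.nodup_append]
    refine ⟨ih, nodup_LL _, ?_⟩
    rintro x hx1 _ hx2 rfl
    have h1 := (g_bounds hx1).2
    have h2 := (mem_LL.mp hx2).1
    have h3 := two_le_q k
    simp only [p] at h2
    omega

lemma noAP_g : ∀ k, NoAP (g k) := by
  intro k
  induction k with
  | zero => exact noAP_LL 0
  | succ k ih =>
    intro a b c hs hne
    rw [g] at hs
    have hq := two_le_q k
    rcases triple_split hs with h | ⟨hu, hv⟩ | ⟨hu, hv⟩ | h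
    · exact ih a b c h hne
    · have ha := g_bounds (hu.subset (show a ∈ [a] by simp))
      have hb := mem_LL.mp (hv.subset (show b ∈ [b, c] by simp))
      have hc := mem_LL.mp (hv.subset (show c ∈ [b, c] by simp))
      simp only [p, q] at hb hc
      omega
    · have ha := g_bounds (hu.subset (show a ∈ [a, b] by simp))
      have hb := g_bounds (hu.subset (show b ∈ [a, b] by simp))
      have hc := mem_LL.mp (hv.subset (show c ∈ [c] by simp))
      simp only [p, q] at hc
      omega
    · exact noAP_LL (k + 1) a b c h hne

lemma length_g : ∀ k, k + 1 ≤ (g k).length := by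
  intro k
  induction k with
  | zero =>
    have := LL_ne_nil 0
    have : (LL 0).length ≠ 0 := fun h => this (List.length_eq_zero_iff.mp h)
    simpa [g] using by omega
  | succ k ih =>
    have h2 := LL_ne_nil (k + 1)
    have h3 : (LL (k + 1)).length ≠ 0 := fun h => h2 (List.length_eq_zero_iff.mp h)
    simp only [g, List.length_append]
    omega

lemma g_prefix : ∀ {k m}, k ≤ m → g k <+: g m := by
  intro k m h
  induction m with
  | zero => rw [Nat.le_zero.mp h]
  | succ m ih =>
    rcases Nat.lt_or_ge k (m + 1) with h' | h'
    · exact (ih (by omega)).trans ⟨LL (m + 1), rfl⟩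
    · have : k = m + 1 := by omega
      rw [this]

/-- The enumeration. -/
noncomputable def f (n : ℕ) : ℕ := (g n).getD n 0

lemma f_eq {n m : ℕ} (h : n ≤ m) : f n = (g m).getD n 0 := by
  obtain ⟨t, ht⟩ := g_prefix h
  rw [f, ← ht, List.getD_append _ _ _ _ (by have := length_g n; omega)]

lemma f_getElem {n m : ℕ} (h : n ≤ m) (hlt : n < (g m).length) : f n = (g m)[n] := by
  rw [f_eq h, List.getD_eq_getElem _ _ hlt]

/-- The set `T = ⋃ k, {p k, p k + 1, ..., q k}` is 3-free. -/
theorem T_threeFree : ThreeFree (⋃ k : ℕ, Set.Icc (p k) (q k)) := by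
  refine ⟨f, ⟨?_, ?_⟩, ?_⟩
  · -- injective
    have key : ∀ m n, m < n → f m ≠ f n := by
      intro m n hmn hfe
      have hn : n < (g n).length := by have := length_g n; omega
      have hm : m < (g n).length := by omega
      rw [f_getElem (le_refl n) hn, f_getElem (le_of_lt hmn) hm] at hfe
      have := ((nodup_g n).getElem_inj_iff).mp hfe
      omega
    intro a b hab
    rcases lt_trichotomy a b with h | h | h
    · exact absurd hab (key a b h)
    · exact h
    · exact absurd hab.symm (key b a h)
  · -- range
    ext x
    simp only [Set.mem_range, Set.mem_iUnion, Set.mem_Icc]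
    constructor
    · rintro ⟨n, rfl⟩
      have hn : n < (g n).length := by have := length_g n; omega
      have : f n ∈ g n := by
        rw [f_getElem (le_refl n) hn]
        exact List.getElem_mem hn
      obtain ⟨m, -, h⟩ := mem_g.mp this
      exact ⟨m, h⟩
    · rintro ⟨k, h1, h2⟩
      have hx : x ∈ g k := mem_g.mpr ⟨k, le_refl _, h1, h2⟩
      obtain ⟨i, hi, hix⟩ := List.getElem_of_mem hx
      refine ⟨i, ?_⟩
      rcases le_or_gt i k with hik | hik
      · rw [f_getElem hik hi]
        exact hix
      · have hpre : g k <+: g i := g_prefix (le_of_lt hik)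
        have hlt : i < (g i).length := lt_of_lt_of_le hi hpre.length_le
        rw [f_getElem (le_refl i) hlt]
        rw [← hpre.getElem hi]
        exact hix
  · -- no AP
    rintro ⟨i, j, k, hij, hjk, heq, hne⟩
    have hk : k < (g k).length := by have := length_g k; omega
    have hjlt : j < (g k).length := by omega
    have hilt : i < (g k).length := by omega
    have hsub : [f i, f j, f k].Sublist (g k) := by
      rw [f_getElem (by omega) hilt, f_getElem (by omega) hjlt,
        f_getElem (le_refl k) hk]
      have := List.map_getElem_sublist (l := g k)
        (is := [⟨i, hilt⟩, ⟨j, hjlt⟩, ⟨k, hk⟩]) (by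
          simp [List.pairwise_cons]
          omega)
      simpa using this
    have h2 : 2 * f j = f i + f k := by omega
    exact noAP_g k (f i) (f j) (f k) hsub h2
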